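/- Let (M_b ⊕ M_b, ∼) be an arbitrage-free combined market, let π_1 be its uniquely determined 1-price functional (so (γ1,γ2) ∼ π_1(γ1,γ2)·(δ0,o) for all (γ1,γ2)), let P¹_t := π_1(δ_t, o), and define the time-t forward 1-price π_{1,t} := π_1 / P¹_t. Then for every t ≥ 0 there exists a uniquely determined linear time-t forward 2-price π_{2,t} (characterized by (γ1,γ2) ∼ π_{2,t}(γ1,γ2)·(o,δ_t)) which is strictly positive on (M_b⁺ ⊕ M_b⁺) \ {(o,o)}, and it is given by π_{2,t} = π_{1,t} / π_{1,t}(o, δ_t). -/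

import Mathlib

open MeasureTheory
open scoped NNReal

/-- The unit zero-coupon bond with maturity `t`: the Dirac measure at `t`,
as a finite signed Borel measure on `[0,∞)` (modeled as `ℝ≥0`). -/
noncomputable def uzcb (t : ℝ≥0) : SignedMeasure ℝ≥0 :=
  (MeasureTheory.Measure.dirac t).toSignedMeasure

/-- A combined market: a reflexive, symmetric, additive relation on the direct sum
M_b ⊕ M_b such that every nonzero pair of nonnegative cash flows has at least one
strictly positive 1-price. -/
def IsCombinedMarket
    (R : SignedMeasure ℝ≥0 × SignedMeasure ℝ≥0 →
         SignedMeasure ℝ≥0 × SignedMeasure ℝ≥0 → Prop) : Prop :=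
  (∀ p, R p p) ∧
  (∀ p q, R p q → R q p) ∧
  (∀ p₁ p₂ q₁ q₂, R p₁ p₂ → R q₁ q₂ → R (p₁ + q₁) (p₂ + q₂)) ∧
  (∀ p : SignedMeasure ℝ≥0 × SignedMeasure ℝ≥0, 0 ≤ p.1 → 0 ≤ p.2 → p ≠ 0 →
    ∃ b : ℝ, 0 < b ∧ R p (b • ((uzcb 0, 0) : SignedMeasure ℝ≥0 × SignedMeasure ℝ≥0)))

/-- No-arbitrage for a combined market. -/
def NoArbC
    (R : SignedMeasure ℝ≥0 × SignedMeasure ℝ≥0 →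
         SignedMeasure ℝ≥0 × SignedMeasure ℝ≥0 → Prop) : Prop :=
  ¬ ∃ p : SignedMeasure ℝ≥0 × SignedMeasure ℝ≥0, 0 ≤ p.1 ∧ 0 ≤ p.2 ∧ p ≠ 0 ∧ R 0 p

/- Auxiliary lemmas -/

private lemma tsm_nonneg {α : Type*} [MeasurableSpace α] (μ : Measure α) [IsFiniteMeasure μ] :
    (0 : SignedMeasure α) ≤ μ.toSignedMeasure := by
  rw [VectorMeasure.le_iff]
  intro i hi
  rw [Measure.toSignedMeasure_apply_measurable hi, VectorMeasure.zero_apply]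
  exact ENNReal.toReal_nonneg

private lemma uzcb_nonneg (t : ℝ≥0) : (0 : SignedMeasure ℝ≥0) ≤ uzcb t :=
  tsm_nonneg _

private lemma uzcb_ne_zero (t : ℝ≥0) : uzcb t ≠ 0 := by
  intro h
  have h2 := congrArg (fun v : SignedMeasure ℝ≥0 => v Set.univ) h
  simp only [uzcb, VectorMeasure.zero_apply,
    Measure.toSignedMeasure_apply_measurable MeasurableSet.univ] at h2
  rw [Measure.real, Measure.dirac_apply_of_mem (Set.mem_univ t)] at h2
  norm_num at h2

private lemma smul_sm_nonneg {α : Type*} [MeasurableSpace α] {c : ℝ} (hc : 0 ≤ c)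
    {v : SignedMeasure α} (hv : 0 ≤ v) : 0 ≤ c • v := by
  rw [VectorMeasure.le_iff'] at hv ⊢
  intro i
  have h := hv i
  rw [VectorMeasure.zero_apply] at h ⊢
  rw [VectorMeasure.smul_apply, smul_eq_mul]
  exact mul_nonneg hc h

private lemma smul_ne_zero' {M : Type*} [AddCommGroup M] [Module ℝ M] {c : ℝ} (hc : c ≠ 0)
    {v : M} (hv : v ≠ 0) : c • v ≠ 0 := by
  intro h
  apply hv
  have h2 := congrArg (fun w : M => c⁻¹ • w) h
  simpa [smul_smul, inv_mul_cancel₀ hc] using h2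

/-- Existence of the (forward) 2-price under NA in a combined market:
for every t there is a uniquely determined time-t forward 2-price, it is linear and
strictly positive on the positive cone minus the origin, and it equals
π_{1,t} / π_{1,t}(o, δ_t), where π_{1,t} = π₁ / P¹_t and P¹_t = π₁(δ_t, o). -/
theorem forward_two_price_existence
    (R : SignedMeasure ℝ≥0 × SignedMeasure ℝ≥0 →
         SignedMeasure ℝ≥0 × SignedMeasure ℝ≥0 → Prop)
    (hM : IsCombinedMarket R) (hNA : NoArbC R)
    (π₁ : SignedMeasure ℝ≥0 × SignedMeasure ℝ≥0 → ℝ)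
    (hπ₁ : ∀ p, R p (π₁ p • ((uzcb 0, 0) : SignedMeasure ℝ≥0 × SignedMeasure ℝ≥0))) :
    ∀ t : ℝ≥0,
      -- existence and uniqueness of the time-t forward 2-price :
      (∃! π₂ : SignedMeasure ℝ≥0 × SignedMeasure ℝ≥0 → ℝ,
        ∀ p, R p (π₂ p • (((0 : SignedMeasure ℝ≥0), uzcb t) :
          SignedMeasure ℝ≥0 × SignedMeasure ℝ≥0))) ∧
      -- it is linear, strictly positive on the cone, and equals π_{1,t}/π_{1,t}(o,δ_t) :
      (∀ π₂ : SignedMeasure ℝ≥0 × SignedMeasure ℝ≥0 → ℝ,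
        (∀ p, R p (π₂ p • (((0 : SignedMeasure ℝ≥0), uzcb t) :
          SignedMeasure ℝ≥0 × SignedMeasure ℝ≥0))) →
        (∀ a b : ℝ, ∀ p q, π₂ (a • p + b • q) = a * π₂ p + b * π₂ q) ∧
        (∀ p : SignedMeasure ℝ≥0 × SignedMeasure ℝ≥0,
          0 ≤ p.1 → 0 ≤ p.2 → p ≠ 0 → 0 < π₂ p) ∧
        π₂ = fun p =>
          (π₁ p / π₁ ((uzcb t, 0) : SignedMeasure ℝ≥0 × SignedMeasure ℝ≥0)) /
          (π₁ (((0 : SignedMeasure ℝ≥0), uzcb t)) /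
            π₁ ((uzcb t, 0) : SignedMeasure ℝ≥0 × SignedMeasure ℝ≥0))) := by
  obtain ⟨hrefl, hsymm, hadd, hpos⟩ := hM
  set E : SignedMeasure ℝ≥0 × SignedMeasure ℝ≥0 := (uzcb 0, 0) with hE
  -- transitivity
  have htrans : ∀ x y z, R x y → R y z → R x z := by
    intro x y z hxy hyz
    have h1 := hadd _ _ _ _ hxy hyz
    have h2 := hadd _ _ _ _ h1 (hrefl (-y))
    have e1 : x + y + -y = x := by abel
    have e2 : y + z + -y = z := by abel
    rwa [e1, e2] at h2
  -- R 0 of difference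
  have hzero : ∀ x y, R x y → R 0 (y - x) := by
    intro x y h
    have h1 := hadd _ _ _ _ h (hrefl (-x))
    have e1 : x + -x = 0 := by abel
    have e2 : y + -x = y - x := by abel
    rwa [e1, e2] at h1
  have hNA' : ∀ z : SignedMeasure ℝ≥0 × SignedMeasure ℝ≥0,
      0 ≤ z.1 → 0 ≤ z.2 → z ≠ 0 → ¬ R 0 z := by
    intro z h1 h2 h3 h4
    exact hNA ⟨z, h1, h2, h3, h4⟩
  -- coefficient uniqueness
  have hcoef : ∀ v : SignedMeasure ℝ≥0 × SignedMeasure ℝ≥0,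
      0 ≤ v.1 → 0 ≤ v.2 → v ≠ 0 → ∀ a b : ℝ, R (a • v) (b • v) → a = b := by
    intro v hv1 hv2 hvne a b h
    by_contra hne
    have key : ∀ u w : ℝ, u < w → ¬ R (u • v) (w • v) := by
      intro u w huw hR
      have h0 : R 0 ((w - u) • v) := by
        have h1 := hzero _ _ hR
        have e : w • v - u • v = (w - u) • v := by
          ext1 <;> ext i hi <;> simp [sub_mul]
        exact e ▸ h1
      refine hNA' _ ?_ ?_ ?_ h0
      · exact smul_sm_nonneg (by linarith) hv1
      · exact smul_sm_nonneg (by linarith) hv2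
      · exact smul_ne_zero' (by intro h'; apply hne; linarith [sub_eq_zero.mp h']) hvne
    rcases lt_or_gt_of_ne hne with hlt | hlt
    · exact key a b hlt h
    · exact key b a hlt (hsymm _ _ h)
  have hEcone1 : (0 : SignedMeasure ℝ≥0) ≤ E.1 := uzcb_nonneg 0
  have hEcone2 : (0 : SignedMeasure ℝ≥0) ≤ E.2 := le_refl 0
  have hEne : E ≠ 0 := fun h => uzcb_ne_zero 0 (congrArg Prod.fst h)
  -- uniqueness of the 1-price
  have huniq : ∀ p b, R p (b • E) → π₁ p = b := by
    intro p b h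
    exact hcoef E hEcone1 hEcone2 hEne _ _ (htrans _ _ _ (hsymm _ _ (hπ₁ p)) h)
  have hπ₁R : ∀ x y, π₁ x = π₁ y → R x y := by
    intro x y h
    have hy := hπ₁ y
    rw [← h] at hy
    exact htrans _ _ _ (hπ₁ x) (hsymm _ _ hy)
  have hπ₁eq : ∀ x y, R x y → π₁ x = π₁ y := by
    intro x y h
    exact huniq x (π₁ y) (htrans _ _ _ h (hπ₁ y))
  -- additivity of π₁
  have hadd₁ : ∀ x y, π₁ (x + y) = π₁ x + π₁ y := by
    intro x y
    refine huniq _ _ ?_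
    rw [add_smul]
    exact hadd _ _ _ _ (hπ₁ x) (hπ₁ y)
  have hzero₁ : π₁ 0 = 0 := by
    refine huniq 0 0 ?_
    rw [zero_smul]
    exact hrefl 0
  have hneg₁ : ∀ x, π₁ (-x) = -π₁ x := by
    intro x
    have h := hadd₁ x (-x)
    rw [add_neg_cancel, hzero₁] at h
    linarith
  -- strict positivity of π₁ on the cone
  have hposπ : ∀ z : SignedMeasure ℝ≥0 × SignedMeasure ℝ≥0,
      0 ≤ z.1 → 0 ≤ z.2 → z ≠ 0 → 0 < π₁ z := by
    intro z h1 h2 h3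
    obtain ⟨b, hb, hRb⟩ := hpos z h1 h2 h3
    rw [huniq z b hRb]
    exact hb
  -- real homogeneity on the cone
  have hsmul_cone : ∀ x : SignedMeasure ℝ≥0 × SignedMeasure ℝ≥0,
      0 ≤ x.1 → 0 ≤ x.2 → ∀ a : ℝ, π₁ (a • x) = a * π₁ x := by
    intro x h1 h2 a
    by_cases hx : x = 0
    · subst hx; rw [smul_zero, hzero₁, mul_zero]
    have hx0 : 0 < π₁ x := hposπ x h1 h2 hx
    -- rational homogeneity
    have hq : ∀ q : ℚ, π₁ ((q : ℝ) • x) = q * π₁ x := by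
      intro q
      have hmap := map_ratCast_smul
        (AddMonoidHom.mk' (fun r : ℝ => π₁ (r • x))
          (fun r s => by
            show π₁ ((r + s) • x) = π₁ (r • x) + π₁ (s • x)
            rw [add_smul]; exact hadd₁ _ _)) ℝ ℝ q (1 : ℝ)
      simpa [smul_eq_mul, mul_one, one_smul] using hmap
    -- strict monotonicity
    have hmono : ∀ u w : ℝ, u < w → π₁ (u • x) < π₁ (w • x) := by
      intro u w huw
      have hsum : w • x = u • x + (w - u) • x := by
        rw [← add_smul]; ring_nf
      rw [hsum, hadd₁]
      have hp : 0 < π₁ ((w - u) • x) := by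
        refine hposπ _ ?_ ?_ ?_
        · exact smul_sm_nonneg (by linarith) h1
        · exact smul_sm_nonneg (by linarith) h2
        · exact smul_ne_zero' (by intro h'; linarith [sub_eq_zero.mp h']) hx
      linarith
    refine le_antisymm ?_ ?_
    · by_contra hlt
      push_neg at hlt
      have ha : a < π₁ (a • x) / π₁ x := (lt_div_iff₀ hx0).2 (by linarith)
      obtain ⟨q, hq1, hq2⟩ := exists_rat_btwn ha
      have h3 : π₁ (a • x) < π₁ ((q : ℝ) • x) := hmono a q hq1
      rw [hq q] at h3
      have h4 : (q : ℝ) * π₁ x < π₁ (a • x) := (lt_div_iff₀ hx0).1 hq2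
      linarith
    · by_contra hlt
      push_neg at hlt
      have ha : π₁ (a • x) / π₁ x < a := (div_lt_iff₀ hx0).2 (by linarith)
      obtain ⟨q, hq1, hq2⟩ := exists_rat_btwn ha
      have h3 : π₁ ((q : ℝ) • x) < π₁ (a • x) := hmono q a hq2
      rw [hq q] at h3
      have h4 : π₁ (a • x) < (q : ℝ) * π₁ x := (div_lt_iff₀ hx0).1 hq1
      linarith
  -- full real homogeneity
  have hsmul : ∀ (p : SignedMeasure ℝ≥0 × SignedMeasure ℝ≥0) (a : ℝ),
      π₁ (a • p) = a * π₁ p := by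
    intro p a
    set Q : SignedMeasure ℝ≥0 × SignedMeasure ℝ≥0 :=
      (p.1.toJordanDecomposition.posPart.toSignedMeasure,
       p.2.toJordanDecomposition.posPart.toSignedMeasure) with hQ
    set N : SignedMeasure ℝ≥0 × SignedMeasure ℝ≥0 :=
      (p.1.toJordanDecomposition.negPart.toSignedMeasure,
       p.2.toJordanDecomposition.negPart.toSignedMeasure) with hN
    have hp : p = Q - N := by
      have h1 := p.1.toSignedMeasure_toJordanDecomposition
      have h2 := p.2.toSignedMeasure_toJordanDecomposition
      rw [JordanDecomposition.toSignedMeasure] at h1 h2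
      ext1
      · simpa [hQ, hN] using h1.symm
      · simpa [hQ, hN] using h2.symm
    have hQ1 : (0 : SignedMeasure ℝ≥0) ≤ Q.1 := tsm_nonneg _
    have hQ2 : (0 : SignedMeasure ℝ≥0) ≤ Q.2 := tsm_nonneg _
    have hN1 : (0 : SignedMeasure ℝ≥0) ≤ N.1 := tsm_nonneg _
    have hN2 : (0 : SignedMeasure ℝ≥0) ≤ N.2 := tsm_nonneg _
    have hsub : ∀ x y : SignedMeasure ℝ≥0 × SignedMeasure ℝ≥0,
        π₁ (x - y) = π₁ x - π₁ y := by
      intro x y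
      rw [sub_eq_add_neg, hadd₁, hneg₁]
      ring
    rw [hp, smul_sub, hsub, hsub, hsmul_cone Q hQ1 hQ2, hsmul_cone N hN1 hN2]
    ring
  -- the main construction
  intro t
  set F : SignedMeasure ℝ≥0 × SignedMeasure ℝ≥0 := ((0 : SignedMeasure ℝ≥0), uzcb t) with hF
  have hFcone1 : (0 : SignedMeasure ℝ≥0) ≤ F.1 := le_refl 0
  have hFcone2 : (0 : SignedMeasure ℝ≥0) ≤ F.2 := uzcb_nonneg t
  have hFne : F ≠ 0 := fun h => uzcb_ne_zero t (congrArg Prod.snd h)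
  have hc : 0 < π₁ F := hposπ F hFcone1 hFcone2 hFne
  set G : SignedMeasure ℝ≥0 × SignedMeasure ℝ≥0 := (uzcb t, (0 : SignedMeasure ℝ≥0)) with hG
  have hd : 0 < π₁ G := by
    refine hposπ G (uzcb_nonneg t) (le_refl 0) ?_
    exact fun h => uzcb_ne_zero t (congrArg Prod.fst h)
  -- the candidate 2-price
  have hprop : ∀ p, R p ((π₁ p / π₁ F) • F) := by
    intro p
    refine hπ₁R _ _ ?_
    rw [hsmul F (π₁ p / π₁ F), div_mul_cancel₀ _ hc.ne']
  have huniq₂ : ∀ π₂ : SignedMeasure ℝ≥0 × SignedMeasure ℝ≥0 → ℝ,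
      (∀ p, R p (π₂ p • F)) → ∀ p, π₂ p = π₁ p / π₁ F := by
    intro π₂ h₂ p
    exact hcoef F hFcone1 hFcone2 hFne _ _
      (htrans _ _ _ (hsymm _ _ (h₂ p)) (hprop p))
  constructor
  · exact ⟨fun p => π₁ p / π₁ F, hprop, fun π₂ h₂ => funext (huniq₂ π₂ h₂)⟩
  · intro π₂ h₂
    have hval := huniq₂ π₂ h₂
    refine ⟨?_, ?_, ?_⟩
    · intro a b p q
      rw [hval, hval, hval, hadd₁, hsmul, hsmul]
      ring
    · intro p h1 h2 h3
      rw [hval]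
      exact div_pos (hposπ p h1 h2 h3) hc
    · funext p
      rw [hval p]
      show π₁ p / π₁ F = (π₁ p / π₁ G) / (π₁ F / π₁ G)
      rw [div_div_div_cancel_right₀]
      exact hd.ne'
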